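/- The mixed Nash equilibria of the non-zero-sum malware detection game Γ are interchangeable: if (ρ₁,μ₁) and (ρ₂,μ₂) are both mixed Nash equilibria of Γ, then (ρ₁,μ₂) and (ρ₂,μ₁) are also mixed Nash equilibria of Γ. -/

import Mathlib

open Finset Set

/-- Expected security damage bilinear form `S(ρ,μ) = Σ_{j,l} ρ j · μ l · S j l`. -/
def Sbil {R M : ℕ} (S : Fin R → Fin M → ℝ) (ρ : Fin R → ℝ) (μ : Fin M → ℝ) : ℝ :=
  ∑ j, ∑ l, ρ j * μ l * S j l

/-- Expected inspection cost `k(ρ) = Σ_j ρ j · C j`. -/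
def kcost {R : ℕ} (C : Fin R → ℝ) (ρ : Fin R → ℝ) : ℝ :=
  ∑ j, ρ j * C j

/-- Defender expected utility `U_d(ρ,μ) = -S(ρ,μ) - k(ρ)` (same in `Γ₀` and `Γ`). -/
def Ud {R M : ℕ} (S : Fin R → Fin M → ℝ) (C : Fin R → ℝ) (ρ : Fin R → ℝ)
    (μ : Fin M → ℝ) : ℝ :=
  -Sbil S ρ μ - kcost C ρ

/-- Mixed Nash equilibrium of the zero-sum game `Γ₀`, where the Attacker's
utility is `U_a^{Γ₀}(ρ,μ) = -U_d(ρ,μ)`. -/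
def NEzero {R M : ℕ} (S : Fin R → Fin M → ℝ) (C : Fin R → ℝ) (ρs : Fin R → ℝ)
    (μs : Fin M → ℝ) : Prop :=
  ρs ∈ stdSimplex ℝ (Fin R) ∧ μs ∈ stdSimplex ℝ (Fin M) ∧
  (∀ ρ ∈ stdSimplex ℝ (Fin R), Ud S C ρs μs ≥ Ud S C ρ μs) ∧
  (∀ μ ∈ stdSimplex ℝ (Fin M), -Ud S C ρs μs ≥ -Ud S C ρs μ)

/-- Mixed Nash equilibrium of the non-zero-sum game `Γ`, where the Attacker's
utility is `U_a^{Γ}(ρ,μ) = Ξ·S(ρ,μ)`. -/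
def NEgame {R M : ℕ} (S : Fin R → Fin M → ℝ) (C : Fin R → ℝ) (Ξ : ℝ)
    (ρs : Fin R → ℝ) (μs : Fin M → ℝ) : Prop :=
  ρs ∈ stdSimplex ℝ (Fin R) ∧ μs ∈ stdSimplex ℝ (Fin M) ∧
  (∀ ρ ∈ stdSimplex ℝ (Fin R), Ud S C ρs μs ≥ Ud S C ρ μs) ∧
  (∀ μ ∈ stdSimplex ℝ (Fin M), Ξ * Sbil S ρs μs ≥ Ξ * Sbil S ρs μ)

/-- Maximin strategy of the Defender. -/
def Maximin {R M : ℕ} (S : Fin R → Fin M → ℝ) (C : Fin R → ℝ)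
    (ρd : Fin R → ℝ) : Prop :=
  ρd ∈ stdSimplex ℝ (Fin R) ∧
  ∀ ρ ∈ stdSimplex ℝ (Fin R),
    sInf ((Ud S C ρd) '' stdSimplex ℝ (Fin M)) ≥
      sInf ((Ud S C ρ) '' stdSimplex ℝ (Fin M))

/-- The Attacker's best-response set to `ρ` in the non-zero-sum game `Γ`. -/
def BRset {R M : ℕ} (S : Fin R → Fin M → ℝ) (Ξ : ℝ) (ρ : Fin R → ℝ) :
    Set (Fin M → ℝ) :=
  {μ | μ ∈ stdSimplex ℝ (Fin M) ∧
    ∀ μ' ∈ stdSimplex ℝ (Fin M), Ξ * Sbil S ρ μ ≥ Ξ * Sbil S ρ μ'}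

/-- Strong Stackelberg Equilibrium strategy of the Defender in `Γ`. -/
def SSEstrat {R M : ℕ} (S : Fin R → Fin M → ℝ) (C : Fin R → ℝ) (Ξ : ℝ)
    (ρs : Fin R → ℝ) : Prop :=
  ρs ∈ stdSimplex ℝ (Fin R) ∧
  ∀ ρ ∈ stdSimplex ℝ (Fin R),
    sSup ((Ud S C ρs) '' BRset S Ξ ρs) ≥ sSup ((Ud S C ρ) '' BRset S Ξ ρ)

/-- mixed Nash equilibria of `Γ` are interchangeable. -/
theorem stmt6 {R M : ℕ} (hR : 0 < R) (hM : 0 < M)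
    (S : Fin R → Fin M → ℝ) (hS : ∀ j l, 0 ≤ S j l)
    (C : Fin R → ℝ) (hC : ∀ j, 0 ≤ C j)
    (Ξ : ℝ) (hΞ : 0 < Ξ)
    (ρ₁ : Fin R → ℝ) (μ₁ : Fin M → ℝ) (ρ₂ : Fin R → ℝ) (μ₂ : Fin M → ℝ)
    (h₁ : NEgame S C Ξ ρ₁ μ₁) (h₂ : NEgame S C Ξ ρ₂ μ₂) :
    NEgame S C Ξ ρ₁ μ₂ ∧ NEgame S C Ξ ρ₂ μ₁ := by
  obtain ⟨hρ₁, hμ₁, hd₁, ha₁⟩ := h₁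
  obtain ⟨hρ₂, hμ₂, hd₂, ha₂⟩ := h₂
  -- attacker conditions without Ξ
  have a₁ : ∀ μ ∈ stdSimplex ℝ (Fin M), Sbil S ρ₁ μ ≤ Sbil S ρ₁ μ₁ := fun μ hμ =>
    le_of_mul_le_mul_left (ha₁ μ hμ) hΞ
  have a₂ : ∀ μ ∈ stdSimplex ℝ (Fin M), Sbil S ρ₂ μ ≤ Sbil S ρ₂ μ₂ := fun μ hμ =>
    le_of_mul_le_mul_left (ha₂ μ hμ) hΞ
  -- the chain of inequalities
  have e1 : Ud S C ρ₁ μ₁ ≥ Ud S C ρ₂ μ₁ := hd₁ ρ₂ hρ₂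
  have e2 : Ud S C ρ₂ μ₁ ≥ Ud S C ρ₂ μ₂ := by
    have := a₂ μ₁ hμ₁; unfold Ud; linarith
  have e3 : Ud S C ρ₂ μ₂ ≥ Ud S C ρ₁ μ₂ := hd₂ ρ₁ hρ₁
  have e4 : Ud S C ρ₁ μ₂ ≥ Ud S C ρ₁ μ₁ := by
    have := a₁ μ₂ hμ₂; unfold Ud; linarith
  have s1 : Sbil S ρ₁ μ₂ = Sbil S ρ₁ μ₁ := by
    have h12 : Ud S C ρ₁ μ₂ = Ud S C ρ₁ μ₁ := le_antisymm (by linarith) e4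
    unfold Ud at h12; linarith
  have s2 : Sbil S ρ₂ μ₁ = Sbil S ρ₂ μ₂ := by
    have h21 : Ud S C ρ₂ μ₁ = Ud S C ρ₂ μ₂ := le_antisymm (by linarith) e2
    unfold Ud at h21; linarith
  refine ⟨⟨hρ₁, hμ₂, ?_, ?_⟩, ⟨hρ₂, hμ₁, ?_, ?_⟩⟩
  · intro ρ hρ
    have := hd₂ ρ hρ; linarith
  · intro μ hμ
    have := a₁ μ hμ
    have : Sbil S ρ₁ μ ≤ Sbil S ρ₁ μ₂ := by linarith
    exact mul_le_mul_of_nonneg_left this hΞ.le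
  · intro ρ hρ
    have := hd₁ ρ hρ
    have h12 : Ud S C ρ₂ μ₁ = Ud S C ρ₁ μ₁ := le_antisymm e1 (by linarith)
    linarith
  · intro μ hμ
    have := a₂ μ hμ
    have : Sbil S ρ₂ μ ≤ Sbil S ρ₂ μ₁ := by linarith
    exact mul_le_mul_of_nonneg_left this hΞ.le
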